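/- Let H be a complex Hilbert space, A a commutative unital C*-subalgebra of B(H), and T ∈ B(H) an isometry. Then axioms (A1) and (A2) hold if and only if T*aT ∈ A for every a ∈ A and the map L : A → A, L(a) = T*aT, is a transfer operator for some unital endomorphism α of A. If, in addition, axiom (A3) holds, then L is faithful and the endomorphism α satisfying (A2) is unique. -/

import Mathlib

open ContinuousLinearMap MeasureTheory

structure IsTransferOperator {H : Type*} [NormedAddCommGroup H] [InnerProductSpace ℂ H]
    [CompleteSpace H] (A : StarSubalgebra ℂ (H →L[ℂ] H))
    (α : ↥A →⋆ₐ[ℂ] ↥A) (L : ↥A → ↥A) : Prop where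
  map_add : ∀ a b : ↥A, L (a + b) = L a + L b
  map_smul : ∀ (c : ℂ) (a : ↥A), L (c • a) = c • L a
  map_one : L 1 = 1
  positive : ∀ a : ↥A, ((a : H →L[ℂ] H)).IsPositive → ((L a : ↥A) : H →L[ℂ] H).IsPositive
  transfer : ∀ a b : ↥A, L (α a * b) = a * L b

set_option maxHeartbeats 1000000

private lemma eq_zero_of_dense' {H : Type*} [NormedAddCommGroup H] [InnerProductSpace ℂ H]
    (d : H →L[ℂ] H) (S : Set H) (hd : ∀ v ∈ S, d v = 0)
    (hdense : Dense (↑(Submodule.span ℂ S) : Set H)) : d = 0 := by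
  ext v
  have hker : (↑(Submodule.span ℂ S) : Set H) ⊆ {x | d x = 0} := by
    intro x hx
    refine Submodule.span_induction ?_ ?_ ?_ ?_ hx
    · exact hd
    · simp
    · intro x y _ _ hx hy
      simp only [Set.mem_setOf_eq] at hx hy ⊢
      rw [map_add, hx, hy, add_zero]
    · intro c x _ hx
      simp only [Set.mem_setOf_eq] at hx ⊢
      rw [ContinuousLinearMap.map_smul, hx, smul_zero]
  have hclosed : IsClosed {x : H | d x = 0} := isClosed_eq d.continuous continuous_const
  have hsub : closure (↑(Submodule.span ℂ S) : Set H) ⊆ {x | d x = 0} :=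
    hclosed.closure_subset_iff.mpr hker
  have := hsub (by rw [hdense.closure_eq]; trivial : v ∈ closure (↑(Submodule.span ℂ S) : Set H))
  simpa using this

theorem stmt0 {H : Type*} [NormedAddCommGroup H] [InnerProductSpace ℂ H] [CompleteSpace H]
    (A : StarSubalgebra ℂ (H →L[ℂ] H)) (hA : IsClosed (A : Set (H →L[ℂ] H)))
    (hcomm : ∀ a ∈ A, ∀ b ∈ A, a * b = b * a)
    (T : H →L[ℂ] H) (hT : adjoint T * T = 1) :
    (((∀ a ∈ A, adjoint T * a * T ∈ A) ∧
        (∃ α : ↥A →⋆ₐ[ℂ] ↥A, ∀ a : ↥A, T * (a : H →L[ℂ] H) = (α a : H →L[ℂ] H) * T)) ↔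
      ((∀ a ∈ A, adjoint T * a * T ∈ A) ∧
        ∃ (α : ↥A →⋆ₐ[ℂ] ↥A) (L : ↥A → ↥A),
          (∀ a : ↥A, ((L a : ↥A) : H →L[ℂ] H) = adjoint T * (a : H →L[ℂ] H) * T) ∧
          IsTransferOperator A α L)) ∧
    (((∀ a ∈ A, adjoint T * a * T ∈ A) ∧
        (∃ α : ↥A →⋆ₐ[ℂ] ↥A, ∀ a : ↥A, T * (a : H →L[ℂ] H) = (α a : H →L[ℂ] H) * T) ∧
        Dense (↑(Submodule.span ℂ {v : H | ∃ a ∈ A, ∃ h : H, v = a (T h)}) : Set H)) →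
      ((∀ a : ↥A,
          adjoint T * (star (a : H →L[ℂ] H) * (a : H →L[ℂ] H)) * T = 0 → a = 0) ∧
        (∀ α₁ α₂ : ↥A →⋆ₐ[ℂ] ↥A,
          (∀ a : ↥A, T * (a : H →L[ℂ] H) = (α₁ a : H →L[ℂ] H) * T) →
          (∀ a : ↥A, T * (a : H →L[ℂ] H) = (α₂ a : H →L[ℂ] H) * T) → α₁ = α₂))) := by
  constructor
  · constructor
    · rintro ⟨hA1, α, hα⟩
      refine ⟨hA1, α, fun a => ⟨adjoint T * a.1 * T, hA1 a.1 a.2⟩, fun a => rfl, ?_⟩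
      -- key: adjoint T * ↑(α a) = ↑a * adjoint T
      have key : ∀ a : ↥A, adjoint T * ((α a : ↥A) : H →L[ℂ] H) = (a : H →L[ℂ] H) * adjoint T := by
        intro a
        have h1 := hα (star a)
        have h2 := congrArg star h1
        simp only [star_mul, ← star_eq_adjoint, StarMemClass.coe_star, star_star,
          map_star] at h2 ⊢
        exact h2.symm
      constructor
      · intro a b; apply Subtype.ext; push_cast; simp [mul_add, add_mul]
      · intro c a; apply Subtype.ext; push_cast; simp [mul_smul_comm, smul_mul_assoc]
      · apply Subtype.ext; simpa using hT
      · intro a ha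
        exact ha.adjoint_conj T
      · intro a b
        apply Subtype.ext
        show adjoint T * ((α a * b : ↥A) : H →L[ℂ] H) * T = ↑(a * ⟨adjoint T * b.1 * T, _⟩)
        push_cast
        rw [← mul_assoc, ← mul_assoc, key a, mul_assoc ((a:H→L[ℂ]H)), mul_assoc, mul_assoc]
    · rintro ⟨hA1, α, L, hL, hTr⟩
      refine ⟨hA1, α, fun a => ?_⟩
      have hLval : ∀ a : ↥A, adjoint T * ((α a : ↥A) : H →L[ℂ] H) * T = (a : H →L[ℂ] H) := by
        intro a
        have h0 := hTr.transfer a 1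
        rw [hTr.map_one, mul_one, mul_one] at h0
        have h1 := congrArg (fun x : ↥A => (x : H →L[ℂ] H)) h0
        simpa [hL] using h1
      set X : H →L[ℂ] H := T * ↑a - ↑(α a) * T with hX
      have hsa : star ((α a : ↥A) : H →L[ℂ] H) = ((α (star a) : ↥A) : H →L[ℂ] H) := by
        rw [← StarMemClass.coe_star, ← map_star]
      have e2 : adjoint T * ((α (star a) : ↥A) : H →L[ℂ] H) * T = star ((a:H→L[ℂ]H)) := by
        have := hLval (star a); simpa [StarMemClass.coe_star] using this
      have e3 : adjoint T * ((α a : ↥A) : H →L[ℂ] H) * T = (a : H →L[ℂ] H) := hLval a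
      have e4 : adjoint T * ((α (star a) : ↥A) : H →L[ℂ] H) * ((α a : ↥A) : H →L[ℂ] H) * T
          = star ((a:H→L[ℂ]H)) * ↑a := by
        have h5 := hLval (star a * a)
        rw [map_mul] at h5
        have hc : ((α (star a) * α a : ↥A) : H →L[ℂ] H)
            = ((α (star a) : ↥A) : H →L[ℂ] H) * ((α a : ↥A) : H →L[ℂ] H) := by push_cast; ring
        rw [hc] at h5
        rw [mul_assoc (adjoint T), h5, MulMemClass.coe_mul, StarMemClass.coe_star]
      have hXX : star X * X = 0 := by
        have hstX : star X = star ((a:H→L[ℂ]H)) * adjoint T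
            - adjoint T * ((α (star a) : ↥A) : H →L[ℂ] H) := by
          rw [hX, star_sub, star_mul, star_mul, hsa, star_eq_adjoint T]
        rw [hX] at hstX
        rw [hX, hstX]
        have expand : (star ((a:H→L[ℂ]H)) * adjoint T - adjoint T * ((α (star a) : ↥A) : H →L[ℂ] H))
              * (T * ↑a - ((α a : ↥A) : H →L[ℂ] H) * T)
            = star ((a:H→L[ℂ]H)) * (adjoint T * T) * ↑a
              - star ((a:H→L[ℂ]H)) * (adjoint T * ((α a : ↥A) : H →L[ℂ] H) * T)
              - (adjoint T * ((α (star a) : ↥A) : H →L[ℂ] H) * T) * ↑a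
              + adjoint T * ((α (star a) : ↥A) : H →L[ℂ] H) * ((α a : ↥A) : H →L[ℂ] H) * T := by
          noncomm_ring
        rw [expand, hT, e3, e2, e4]
        noncomm_ring
      have hnX : ‖X‖ * ‖X‖ = 0 := by
        rw [← CStarRing.norm_star_mul_self, hXX, norm_zero]
      have hX0 : X = 0 := norm_eq_zero.mp (mul_self_eq_zero.mp hnX)
      rw [hX] at hX0
      exact sub_eq_zero.mp hX0
  · rintro ⟨hA1, ⟨α, hα⟩, hdense⟩
    have vanish : ∀ d : ↥A, (∀ h : H, (d : H →L[ℂ] H) (T h) = 0) → d = 0 := by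
      intro d hd
      have h0 : (d : H →L[ℂ] H) = 0 := by
        apply eq_zero_of_dense' _ _ _ hdense
        rintro v ⟨b, hb, h, rfl⟩
        have hdb : (d : H →L[ℂ] H) * b = b * (d : H →L[ℂ] H) := hcomm _ d.2 _ hb
        calc (d : H →L[ℂ] H) (b (T h)) = ((d : H →L[ℂ] H) * b) (T h) := rfl
          _ = (b * (d : H →L[ℂ] H)) (T h) := by rw [hdb]
          _ = b ((d : H →L[ℂ] H) (T h)) := rfl
          _ = 0 := by rw [hd h, map_zero]
      exact Subtype.ext h0
    constructor
    · intro a ha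
      apply vanish
      intro h
      have hz : (inner ℂ (((a:H→L[ℂ]H)) (T h)) (((a:H→L[ℂ]H)) (T h)) : ℂ) = 0 := by
        have h1 : (adjoint T * (star ((a:H→L[ℂ]H)) * ↑a) * T) h = 0 := by rw [ha]; rfl
        have h2 : (adjoint T) ((star ((a:H→L[ℂ]H)) * ↑a) (T h)) = 0 := h1
        have h3 := congrArg (fun x => (inner ℂ x h : ℂ)) h2
        simp only [inner_zero_left] at h3
        rw [adjoint_inner_left] at h3
        have h4 : ((star ((a:H→L[ℂ]H)) * ↑a) (T h)) = star ((a:H→L[ℂ]H)) (((a:H→L[ℂ]H)) (T h)) := rfl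
        rw [h4, star_eq_adjoint, adjoint_inner_left] at h3
        exact h3
      exact inner_self_eq_zero.mp hz
    · intro α₁ α₂ h₁ h₂
      apply StarAlgHom.ext
      intro a
      have hd : α₁ a - α₂ a = 0 := by
        apply vanish
        intro h
        have : ((α₁ a : ↥A) : H →L[ℂ] H) * T = ((α₂ a : ↥A) : H →L[ℂ] H) * T := by
          rw [← h₁ a, ← h₂ a]
        have hpt := congrArg (fun f : H →L[ℂ] H => f h) this
        simp only [mul_apply_eq_comp] at hpt
        push_cast
        calc (((α₁ a : ↥A) : H →L[ℂ] H) - ((α₂ a : ↥A) : H →L[ℂ] H)) (T h)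
            = ((α₁ a : ↥A) : H →L[ℂ] H) (T h) - ((α₂ a : ↥A) : H →L[ℂ] H) (T h) := rfl
          _ = 0 := by rw [hpt, sub_self]
      exact sub_eq_zero.mp hd
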